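/- Let H be a symmetric positive definite real n×n matrix and let ℓ : ℝⁿ → ℝ be convex and differentiable with L-Lipschitz gradient, L > 0. Then for every step size s with 0 < s ≤ λ_min(H)/L, the operator u ↦ u − s·H⁻¹∇ℓ(u) is nonexpansive with respect to ‖·‖_H, i.e. ‖(u₁ − s·H⁻¹∇ℓ(u₁)) − (u₂ − s·H⁻¹∇ℓ(u₂))‖_H ≤ ‖u₁ − u₂‖_H for all u₁, u₂ ∈ ℝⁿ. -/

import Mathlib

open scoped RealInnerProductSpace
open Filter Topology

section Aux

variable {F : Type*} [NormedAddCommGroup F] [InnerProductSpace ℝ F] [CompleteSpace F]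

lemma aux_dirDeriv (ℓ : F → ℝ) (hdiff : Differentiable ℝ ℓ) (x v : F) (t : ℝ) :
    HasDerivAt (fun t : ℝ => ℓ (t • v + x)) ⟪gradient ℓ (t • v + x), v⟫ t := by
  have hc : HasDerivAt (fun t : ℝ => t • v + x) v t := by
    simpa using ((hasDerivAt_id t).smul_const v).add_const x
  have hf := hasGradientAt_iff_hasFDerivAt.mp (hdiff (t • v + x)).hasGradientAt
  exact (hf.comp_hasDerivAt t hc).congr_deriv (by simp [InnerProductSpace.toDual_apply_apply])

lemma aux_conv_lower (ℓ : F → ℝ) (hconv : ConvexOn ℝ Set.univ ℓ) (hdiff : Differentiable ℝ ℓ)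
    (x y : F) : ℓ x + ⟪gradient ℓ x, y - x⟫ ≤ ℓ y := by
  set v := y - x with hv
  have hφconv : ConvexOn ℝ Set.univ (fun t : ℝ => ℓ (t • v + x)) := by
    have h := hconv.comp_affineMap (AffineMap.lineMap x (x + v) : ℝ →ᵃ[ℝ] F)
    simp only [Set.preimage_univ] at h
    convert h using 2 with t
    case e'_12 => simp [AffineMap.lineMap_apply, add_comm]
    all_goals rfl
  have hkey := hφconv.le_slope_of_hasDerivAt (Set.mem_univ (0:ℝ)) (Set.mem_univ (1:ℝ))
    one_pos (aux_dirDeriv ℓ hdiff x v 0)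
  simp only [slope_def_field, zero_smul, zero_add, one_smul] at hkey
  have h1 : v + x = y := by simp [hv]
  rw [h1] at hkey
  rw [hv] at hkey ⊢
  linarith [hkey, (by norm_num : (ℓ y - ℓ x) / (1 - 0) = ℓ y - ℓ x)]

lemma aux_descent (ℓ : F → ℝ) (hdiff : Differentiable ℝ ℓ)
    (L : ℝ) (hL : 0 < L) (hLip : ∀ u v, ‖gradient ℓ u - gradient ℓ v‖ ≤ L * ‖u - v‖)
    (x v : F) : ℓ (v + x) ≤ ℓ x + ⟪gradient ℓ x, v⟫ + L * ‖v‖ ^ 2 := by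
  set ψ : ℝ → ℝ := fun t => ℓ (t • v + x) - t * ⟪gradient ℓ x, v⟫ with hψ
  have hd : ∀ t : ℝ, HasDerivAt ψ (⟪gradient ℓ (t • v + x) - gradient ℓ x, v⟫) t := by
    intro t
    have := (aux_dirDeriv ℓ hdiff x v t).sub
      (hasDerivAt_mul_const (⟪gradient ℓ x, v⟫) (x := t))
    exact this.congr_deriv (by rw [inner_sub_left])
  obtain ⟨c, hc, heq⟩ := exists_hasDerivAt_eq_slope ψ
    (fun t => ⟪gradient ℓ (t • v + x) - gradient ℓ x, v⟫) one_pos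
    (fun t _ => (hd t).continuousAt.continuousWithinAt)
    (fun t _ => hd t)
  have hslope : (ψ 1 - ψ 0) / (1 - 0) = ℓ (v + x) - ⟪gradient ℓ x, v⟫ - ℓ x := by
    simp [hψ]
  rw [hslope] at heq
  have hb : ⟪gradient ℓ (c • v + x) - gradient ℓ x, v⟫ ≤ L * ‖v‖ ^ 2 := by
    have h1 := real_inner_le_norm (gradient ℓ (c • v + x) - gradient ℓ x) v
    have h2 := hLip (c • v + x) x
    have h3 : ‖(c • v + x) - x‖ = c * ‖v‖ := by
      simp [norm_smul, abs_of_pos hc.1]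
    rw [h3] at h2
    have h4 := mul_le_mul_of_nonneg_right h2 (norm_nonneg v)
    nlinarith [mul_nonneg (mul_nonneg hL.le (sub_nonneg.2 hc.2.le)) (sq_nonneg ‖v‖),
      sq_nonneg ‖v‖]
  rw [heq] at hb
  linarith

lemma aux_coco_one (ℓ : F → ℝ) (hconv : ConvexOn ℝ Set.univ ℓ) (hdiff : Differentiable ℝ ℓ)
    (L : ℝ) (hL : 0 < L) (hLip : ∀ u v, ‖gradient ℓ u - gradient ℓ v‖ ≤ L * ‖u - v‖)
    (x y : F) :
    ℓ x + ⟪gradient ℓ x, y - x⟫ + ‖gradient ℓ y - gradient ℓ x‖ ^ 2 / (4 * L) ≤ ℓ y := by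
  set g := gradient ℓ y - gradient ℓ x with hg
  set t : ℝ := 1 / (2 * L) with ht
  have hdes := aux_descent ℓ hdiff L hL hLip y (-(t • g))
  have hcl := aux_conv_lower ℓ hconv hdiff x (-(t • g) + y)
  have e1 : ⟪gradient ℓ x, -(t • g) + y - x⟫
      = ⟪gradient ℓ x, y - x⟫ - t * ⟪gradient ℓ x, g⟫ := by
    rw [show -(t • g) + y - x = (y - x) - t • g by abel, inner_sub_right, real_inner_smul_right]
  have e2 : ⟪gradient ℓ y, -(t • g)⟫ = -(t * ⟪gradient ℓ y, g⟫) := by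
    rw [inner_neg_right, real_inner_smul_right]
  have e3 : ‖-(t • g)‖ ^ 2 = t ^ 2 * ‖g‖ ^ 2 := by
    rw [norm_neg, norm_smul]; rw [mul_pow]; norm_num [sq_abs]
  have e4 : ⟪gradient ℓ y, g⟫ - ⟪gradient ℓ x, g⟫ = ‖g‖ ^ 2 := by
    rw [← inner_sub_left, ← hg, real_inner_self_eq_norm_sq]
  have e5 : t * ⟪gradient ℓ y, g⟫ - t * ⟪gradient ℓ x, g⟫ = t * ‖g‖ ^ 2 := by
    rw [← mul_sub, e4]
  have e6 : ‖g‖ ^ 2 / (4 * L) = t * ‖g‖ ^ 2 - L * (t ^ 2 * ‖g‖ ^ 2) := by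
    rw [ht]; field_simp; ring
  rw [e1] at hcl; rw [e2, e3] at hdes
  linarith [hcl, hdes, e5, e6]

lemma aux_coco (ℓ : F → ℝ) (hconv : ConvexOn ℝ Set.univ ℓ) (hdiff : Differentiable ℝ ℓ)
    (L : ℝ) (hL : 0 < L) (hLip : ∀ u v, ‖gradient ℓ u - gradient ℓ v‖ ≤ L * ‖u - v‖)
    (x y : F) :
    ‖gradient ℓ x - gradient ℓ y‖ ^ 2 ≤ 2 * L * ⟪gradient ℓ x - gradient ℓ y, x - y⟫ := by
  have h1 := aux_coco_one ℓ hconv hdiff L hL hLip x y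
  have h2 := aux_coco_one ℓ hconv hdiff L hL hLip y x
  rw [norm_sub_rev (gradient ℓ x)] at h2 ⊢
  have e1 : ⟪gradient ℓ x, y - x⟫ + ⟪gradient ℓ y, x - y⟫
      = -⟪gradient ℓ x - gradient ℓ y, x - y⟫ := by
    rw [inner_sub_left, show y - x = -(x - y) by abel, inner_neg_right]; ring
  have h3 : ‖gradient ℓ y - gradient ℓ x‖ ^ 2 / (2 * L)
      ≤ ⟪gradient ℓ x - gradient ℓ y, x - y⟫ := by
    have e7 : ‖gradient ℓ y - gradient ℓ x‖ ^ 2 / (4 * L)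
        + ‖gradient ℓ y - gradient ℓ x‖ ^ 2 / (4 * L)
        = ‖gradient ℓ y - gradient ℓ x‖ ^ 2 / (2 * L) := by
      field_simp; ring
    linarith [h1, h2, e1, e7]
  rw [div_le_iff₀ (by positivity)] at h3
  linarith

end Aux

/-- The `H`-inner product `⟨u, v⟩_H = uᵀ H v` on `ℝⁿ`. -/
noncomputable def hIP {n : ℕ} (H : Matrix (Fin n) (Fin n) ℝ)
    (u v : EuclideanSpace ℝ (Fin n)) : ℝ :=
  ⟪u, Matrix.toEuclideanLin H v⟫

/-- The `H`-norm `‖u‖_H = √(uᵀ H u)` on `ℝⁿ`. -/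
noncomputable def hNorm {n : ℕ} (H : Matrix (Fin n) (Fin n) ℝ)
    (u : EuclideanSpace ℝ (Fin n)) : ℝ :=
  Real.sqrt (hIP H u u)

/-- The smallest eigenvalue `λ_min(H)` of a Hermitian matrix `H`. -/
noncomputable def lambdaMin {n : ℕ} (H : Matrix (Fin n) (Fin n) ℝ)
    (hH : H.IsHermitian) : ℝ :=
  ⨅ i, hH.eigenvalues i

lemma aux_euclid_apply_eigen {n : ℕ} (H : Matrix (Fin n) (Fin n) ℝ) (hH : H.IsHermitian)
    (i : Fin n) :
    Matrix.toEuclideanLin H (hH.eigenvectorBasis i) = hH.eigenvalues i • hH.eigenvectorBasis i := by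
  apply (WithLp.equiv 2 _).injective
  simp only [Matrix.toEuclideanLin_apply, Equiv.apply_symm_apply, WithLp.equiv_apply, WithLp.ofLp_toLp, WithLp.ofLp_smul]
  exact hH.mulVec_eigenvectorBasis i

lemma aux_rayleigh_min {n : ℕ} (H : Matrix (Fin n) (Fin n) ℝ) (hH : H.IsHermitian)
    (w : EuclideanSpace ℝ (Fin n)) :
    lambdaMin H hH * ‖w‖ ^ 2 ≤ ⟪w, Matrix.toEuclideanLin H w⟫ := by
  set b := hH.eigenvectorBasis with hb
  have hsym := (Matrix.isHermitian_iff_isSymmetric.mp hH)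
  have hexp : ∀ y : EuclideanSpace ℝ (Fin n), ⟪w, y⟫ = ∑ i, b.repr y i * ⟪w, b i⟫ := by
    intro y
    conv_lhs => rw [← b.sum_repr y]
    rw [inner_sum]
    exact Finset.sum_congr rfl fun i _ => real_inner_smul_right _ _ _
  have hreprA : ∀ i, b.repr (Matrix.toEuclideanLin H w) i = hH.eigenvalues i * b.repr w i := by
    intro i
    rw [b.repr_apply_apply, b.repr_apply_apply, ← hsym (b i) w,
      aux_euclid_apply_eigen H hH i, real_inner_smul_left]
  have hAw : ⟪w, Matrix.toEuclideanLin H w⟫ = ∑ i, hH.eigenvalues i * (b.repr w i) ^ 2 := by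
    rw [hexp]
    refine Finset.sum_congr rfl fun i _ => ?_
    rw [hreprA i, real_inner_comm, ← b.repr_apply_apply]
    ring
  have hw : ‖w‖ ^ 2 = ∑ i, (b.repr w i) ^ 2 := by
    have := b.repr.norm_map w
    rw [← this, EuclideanSpace.norm_eq]
    rw [Real.sq_sqrt (by positivity)]
    refine Finset.sum_congr rfl fun i _ => ?_
    rw [Real.norm_eq_abs, sq_abs]
  rw [hAw, hw, Finset.mul_sum]
  refine Finset.sum_le_sum fun i _ => ?_
  have hle : lambdaMin H hH ≤ hH.eigenvalues i :=
    ciInf_le (Set.Finite.bddBelow (Set.finite_range _)) i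
  nlinarith [sq_nonneg (b.repr w i)]

set_option maxHeartbeats 1000000 in
/-- for convex `ℓ` with `L`-Lipschitz gradient and
`0 < s ≤ λ_min(H)/L`, the operator `u ↦ u − s·H⁻¹∇ℓ(u)` is nonexpansive
with respect to `‖·‖_H`. -/
theorem stmt_2 {n : ℕ} (H : Matrix (Fin n) (Fin n) ℝ) (hH : H.PosDef)
    (ℓ : EuclideanSpace ℝ (Fin n) → ℝ)
    (hconv : ConvexOn ℝ Set.univ ℓ) (hdiff : Differentiable ℝ ℓ)
    (L : ℝ) (hL : 0 < L)
    (hLip : ∀ u v, ‖gradient ℓ u - gradient ℓ v‖ ≤ L * ‖u - v‖)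
    (s : ℝ) (hs : 0 < s) (hs' : s ≤ lambdaMin H hH.1 / L) :
    ∀ u₁ u₂,
      hNorm H ((u₁ - s • Matrix.toEuclideanLin H⁻¹ (gradient ℓ u₁)) -
               (u₂ - s • Matrix.toEuclideanLin H⁻¹ (gradient ℓ u₂))) ≤
        hNorm H (u₁ - u₂) := by
  intro u₁ u₂
  rcases Nat.eq_zero_or_pos n with hn | hn
  · subst hn
    haveI : Subsingleton (EuclideanSpace ℝ (Fin 0)) :=
      ⟨fun a b => by ext i; exact i.elim0⟩
    rw [Subsingleton.elim u₁ u₂, sub_self, sub_self]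
  set g := gradient ℓ u₁ - gradient ℓ u₂ with hg
  set d := u₁ - u₂ with hd
  have hsym := (Matrix.isHermitian_iff_isSymmetric.mp hH.1)
  have hAB : ∀ x : EuclideanSpace ℝ (Fin n),
      Matrix.toEuclideanLin H (Matrix.toEuclideanLin H⁻¹ x) = x := by
    intro x
    apply (WithLp.equiv 2 _).injective
    simp only [Matrix.toEuclideanLin_apply, Equiv.apply_symm_apply]
    rw [Matrix.mulVec_mulVec, Matrix.mul_nonsing_inv H hH.det_pos.ne'.isUnit,
      Matrix.one_mulVec]
  have hlampos : 0 < lambdaMin H hH.1 := by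
    haveI : Nonempty (Fin n) := ⟨⟨0, hn⟩⟩
    obtain ⟨i₀, -, hi₀⟩ := Finset.exists_min_image Finset.univ hH.1.eigenvalues
      ⟨Classical.arbitrary (Fin n), Finset.mem_univ _⟩
    have h1 : hH.1.eigenvalues i₀ ≤ lambdaMin H hH.1 :=
      le_ciInf fun i => hi₀ i (Finset.mem_univ i)
    exact lt_of_lt_of_le (hH.eigenvalues_pos i₀) h1
  set lam := lambdaMin H hH.1 with hlam
  have harg : (u₁ - s • Matrix.toEuclideanLin H⁻¹ (gradient ℓ u₁)) -
      (u₂ - s • Matrix.toEuclideanLin H⁻¹ (gradient ℓ u₂))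
      = d - s • Matrix.toEuclideanLin H⁻¹ g := by
    rw [hg, map_sub, smul_sub, hd]; abel
  have hcoco : ‖g‖ ^ 2 ≤ 2 * L * ⟪g, d⟫ := by
    rw [hg, hd]; exact aux_coco ℓ hconv hdiff L hL hLip u₁ u₂
  clear_value g d
  rw [harg]
  unfold hNorm
  apply Real.sqrt_le_sqrt
  set B : EuclideanSpace ℝ (Fin n) →ₗ[ℝ] EuclideanSpace ℝ (Fin n) :=
    Matrix.toEuclideanLin H⁻¹ with hB
  set w := B g with hw
  clear_value w
  have hexp : hIP H (d - s • w) (d - s • w)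
      = hIP H d d - 2 * s * ⟪g, d⟫ + s ^ 2 * ⟪w, g⟫ := by
    unfold hIP
    have hAw : Matrix.toEuclideanLin H w = g := by rw [hw, hB]; exact hAB g
    have hAstep : Matrix.toEuclideanLin H (d - s • w)
        = Matrix.toEuclideanLin H d - s • g := by
      rw [map_sub, map_smul, hAw]
    rw [hAstep]
    rw [inner_sub_left, inner_sub_right, inner_sub_right, real_inner_smul_left,
      real_inner_smul_left, real_inner_smul_right, real_inner_smul_right]
    have hsymm1 : ⟪w, Matrix.toEuclideanLin H d⟫ = ⟪g, d⟫ := by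
      rw [← hsym w d, hAw]
    have hsymm2 : ⟪d, g⟫ = ⟪g, d⟫ := real_inner_comm _ _
    rw [hsymm1, hsymm2]
    ring
  rw [hexp]
  have hgd : 0 ≤ ⟪g, d⟫ := by nlinarith [sq_nonneg ‖g‖]
  have hBbound : lam * ⟪w, g⟫ ≤ ‖g‖ ^ 2 := by
    have h1 : lam * ‖w‖ ^ 2 ≤ ⟪w, Matrix.toEuclideanLin H w⟫ := aux_rayleigh_min H hH.1 w
    have h2 : ⟪w, Matrix.toEuclideanLin H w⟫ ≤ ‖w‖ * ‖Matrix.toEuclideanLin H w‖ :=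
      real_inner_le_norm _ _
    have h3 : Matrix.toEuclideanLin H w = g := by rw [hw, hB]; exact hAB g
    rw [h3] at h1 h2
    by_cases hw0 : ‖w‖ = 0
    · have hz : w = 0 := norm_eq_zero.mp hw0
      rw [hz]
      simp [sq_nonneg]
    · have hwpos : 0 < ‖w‖ := lt_of_le_of_ne (norm_nonneg w) (Ne.symm hw0)
      have h5 : lam * ‖w‖ ≤ ‖g‖ := by
        have h6 := h1.trans h2
        have h7 : ‖w‖ * (lam * ‖w‖) ≤ ‖w‖ * ‖g‖ := by nlinarith
        exact le_of_mul_le_mul_left h7 hwpos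
      have h8 := mul_le_mul_of_nonneg_left (real_inner_le_norm w g) hlampos.le
      have h9 := mul_le_mul_of_nonneg_right h5 (norm_nonneg g)
      nlinarith
  have hsL : s * L ≤ lam := (le_div_iff₀ hL).mp hs'
  have hfinal : s ^ 2 * ⟪w, g⟫ ≤ 2 * s * ⟪g, d⟫ := by
    have key : lam * (s ^ 2 * ⟪w, g⟫) ≤ lam * (2 * s * ⟪g, d⟫) := by
      have k1 := mul_le_mul_of_nonneg_left hBbound (sq_nonneg s)
      have k2 := mul_le_mul_of_nonneg_left hcoco (sq_nonneg s)
      have k3 := mul_le_mul_of_nonneg_right hsL (mul_nonneg hs.le hgd)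
      nlinarith [k1, k2, k3]
    exact le_of_mul_le_mul_left key hlampos
  linarith
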